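/- Let m be an odd positive integer and let a(X), b(X) ∈ R_m, not both zero. Set g_{a,b}(X) = gcd(a(X), b(X), X^m − 1) in (Z/2)[X]. Then the minimum weight of the code C_{a,b} satisfies wt(C_{a,b}) = min { wt_H(c(X)a(X)) + 2·wt_H(c(X)b(X)) : c(X) ∈ ⟨g_{a,b}(X)⟩, c(X) ≠ 0 }, where ⟨g_{a,b}(X)⟩ is the ideal of R_m generated by g_{a,b}(X); that is, every nonzero codeword of C_{a,b} arises as (c·a, 2(c·b)) for a unique nonzero c(X) ∈ ⟨g_{a,b}(X)⟩. -/

import Mathlib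

open Polynomial

noncomputable section

/-- The polynomial `X^m - 1` over `Z/2`. -/
def fm (m : ℕ) : Polynomial (ZMod 2) := X ^ m - 1

/-- The polynomial `X^m - 1` over `Z/4`. -/
def fm4 (m : ℕ) : Polynomial (ZMod 4) := X ^ m - 1

/-- `R_m = (Z/2)[X]/⟨X^m - 1⟩`. -/
abbrev R2 (m : ℕ) : Type := Polynomial (ZMod 2) ⧸ Ideal.span {fm m}

/-- `R'_m = (Z/4)[X]/⟨X^m - 1⟩`. -/
abbrev R4 (m : ℕ) : Type := Polynomial (ZMod 4) ⧸ Ideal.span {fm4 m}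

def mk2 (m : ℕ) : Polynomial (ZMod 2) →+* R2 m := Ideal.Quotient.mk _

def mk4 (m : ℕ) : Polynomial (ZMod 4) →+* R4 m := Ideal.Quotient.mk _

/-- The canonical representative (of degree `< m`) of an element of `R2 m`. -/
def rep2 (m : ℕ) (r : R2 m) : Polynomial (ZMod 2) :=
  (Function.surjInv (Ideal.Quotient.mk_surjective (I := Ideal.span {fm m})) r) %ₘ fm m

/-- The canonical representative (of degree `< m`) of an element of `R4 m`. -/
def rep4 (m : ℕ) (r : R4 m) : Polynomial (ZMod 4) :=
  (Function.surjInv (Ideal.Quotient.mk_surjective (I := Ideal.span {fm4 m})) r) %ₘ fm4 m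

/-- Coefficientwise doubling map `(Z/2)[X] → (Z/4)[X]`, `a ↦ 2a` on each coefficient. -/
def polyDbl (p : Polynomial (ZMod 2)) : Polynomial (ZMod 4) :=
  ∑ i ∈ p.support, Polynomial.C (2 * ((p.coeff i).val : ZMod 4)) * X ^ i

/-- The additive embedding `R_m → R'_m`, `f ↦ 2f`. -/
def iota (m : ℕ) (r : R2 m) : R4 m := mk4 m (polyDbl (rep2 m r))

/-- Hamming weight of an element of `R_m` (of its coefficient vector). -/
def wt2 (m : ℕ) (r : R2 m) : ℕ := (rep2 m r).support.card

/-- Lee weight of an element of `Z/4`. -/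
def lee (x : ZMod 4) : ℕ := min x.val (4 - x.val)

/-- Lee weight of an element of `R'_m` (of its coefficient vector). -/
def wtLee (m : ℕ) (r : R4 m) : ℕ := ∑ i ∈ (rep4 m r).support, lee ((rep4 m r).coeff i)

/-- The augmentation ideal `J_m = ⟨X - 1⟩` of `R_m`. -/
def Jm (m : ℕ) : Ideal (R2 m) := Ideal.span {mk2 m (X - 1)}

/-- The `Z2Z4`-additive cyclic code `C_{a,b} = {(f·a, 2(f·b)) : f ∈ R_m}`. -/
def Cab (m : ℕ) (a b : R2 m) : Set (R2 m × R4 m) :=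
  {w | ∃ f : R2 m, w = (f * a, iota m (f * b))}

/-- Dimension of `C_{a,b}` as a vector space over `Z/2`, i.e. `log₂ |C_{a,b}|`. -/
def dimCab (m : ℕ) (a b : R2 m) : ℕ := Nat.log 2 (Nat.card (Cab m a b))

/-- `(X^m - 1)/(X - 1) = X^{m-1} + ⋯ + X + 1` over `Z/2`. -/
def geomPoly (m : ℕ) : Polynomial (ZMod 2) := ∑ i ∈ Finset.range m, X ^ i

/-- `ℓ_m`: minimal degree of the irreducible factors of `(X^m-1)/(X-1)` in `(Z/2)[X]`. -/
def ell (m : ℕ) : ℕ :=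
  sInf {d | ∃ p : Polynomial (ZMod 2), Irreducible p ∧ p ∣ geomPoly m ∧ p.natDegree = d}

/-- The binary entropy function `H(x) = -x·log₂x - (1-x)·log₂(1-x)`. -/
def Hent (x : ℝ) : ℝ := -(x * Real.logb 2 x) - (1 - x) * Real.logb 2 (1 - x)

/-! ### Auxiliary lemmas -/

instance : Nontrivial (ZMod 4) := ⟨0, 2, by decide⟩

lemma fm_monic {m : ℕ} (hm : 0 < m) : (fm m).Monic := by
  simpa [fm] using Polynomial.monic_X_pow_sub_C (1 : ZMod 2) hm.ne'

lemma fm_degree {m : ℕ} (hm : 0 < m) : (fm m).degree = m := by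
  simpa [fm] using Polynomial.degree_X_pow_sub_C hm (1 : ZMod 2)

lemma fm4_monic {m : ℕ} (hm : 0 < m) : (fm4 m).Monic := by
  simpa [fm4] using Polynomial.monic_X_pow_sub_C (1 : ZMod 4) hm.ne'

lemma fm4_degree {m : ℕ} (hm : 0 < m) : (fm4 m).degree = m := by
  simpa [fm4] using Polynomial.degree_X_pow_sub_C hm (1 : ZMod 4)

lemma mk2_fm (m : ℕ) : mk2 m (fm m) = 0 := by
  rw [mk2, Ideal.Quotient.eq_zero_iff_mem]
  exact Ideal.subset_span (Set.mem_singleton _)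

lemma mk4_fm4 (m : ℕ) : mk4 m (fm4 m) = 0 := by
  rw [mk4, Ideal.Quotient.eq_zero_iff_mem]
  exact Ideal.subset_span (Set.mem_singleton _)

lemma mk2_eq_zero (m : ℕ) (q : Polynomial (ZMod 2)) : mk2 m q = 0 ↔ fm m ∣ q := by
  rw [mk2, Ideal.Quotient.eq_zero_iff_mem, Ideal.mem_span_singleton]

lemma mk4_eq_zero (m : ℕ) (q : Polynomial (ZMod 4)) : mk4 m q = 0 ↔ fm4 m ∣ q := by
  rw [mk4, Ideal.Quotient.eq_zero_iff_mem, Ideal.mem_span_singleton]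

lemma mk2_rep2 {m : ℕ} (hm : 0 < m) (r : R2 m) : mk2 m (rep2 m r) = r := by
  set p := Function.surjInv (Ideal.Quotient.mk_surjective (I := Ideal.span {fm m})) r with hp
  have hps : mk2 m p = r :=
    Function.surjInv_eq (Ideal.Quotient.mk_surjective (I := Ideal.span {fm m})) r
  have hmod : p %ₘ fm m = p - fm m * (p /ₘ fm m) :=
    eq_sub_of_add_eq (Polynomial.modByMonic_add_div p (fm m))
  rw [rep2, ← hp, hmod, map_sub, map_mul, mk2_fm, zero_mul, sub_zero, hps]

lemma mk4_rep4 {m : ℕ} (hm : 0 < m) (r : R4 m) : mk4 m (rep4 m r) = r := by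
  set p := Function.surjInv (Ideal.Quotient.mk_surjective (I := Ideal.span {fm4 m})) r with hp
  have hps : mk4 m p = r :=
    Function.surjInv_eq (Ideal.Quotient.mk_surjective (I := Ideal.span {fm4 m})) r
  have hmod : p %ₘ fm4 m = p - fm4 m * (p /ₘ fm4 m) :=
    eq_sub_of_add_eq (Polynomial.modByMonic_add_div p (fm4 m))
  rw [rep4, ← hp, hmod, map_sub, map_mul, mk4_fm4, zero_mul, sub_zero, hps]

lemma rep2_degree_lt {m : ℕ} (hm : 0 < m) (r : R2 m) : (rep2 m r).degree < (m : WithBot ℕ) := by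
  rw [← fm_degree hm]
  exact Polynomial.degree_modByMonic_lt _ (fm_monic hm)

lemma rep2_mk2 {m : ℕ} (hm : 0 < m) {q : Polynomial (ZMod 2)} (hq : q.degree < (m : WithBot ℕ)) :
    rep2 m (mk2 m q) = q := by
  set p := Function.surjInv (Ideal.Quotient.mk_surjective (I := Ideal.span {fm m})) (mk2 m q)
    with hp
  have hps : mk2 m p = mk2 m q :=
    Function.surjInv_eq (Ideal.Quotient.mk_surjective (I := Ideal.span {fm m})) _
  have hdvd : fm m ∣ p - q := by
    rw [← Ideal.mem_span_singleton]
    exact Ideal.Quotient.eq.mp hps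
  have h1 : (p - q) %ₘ fm m = 0 := (Polynomial.modByMonic_eq_zero_iff_dvd (fm_monic hm)).2 hdvd
  have : p %ₘ fm m = ((p - q) + q) %ₘ fm m := by rw [sub_add_cancel]
  rw [rep2, ← hp, this, Polynomial.add_modByMonic, h1, zero_add,
    (Polynomial.modByMonic_eq_self_iff (fm_monic hm)).2 (by rw [fm_degree hm]; exact hq)]

lemma rep4_mk4 {m : ℕ} (hm : 0 < m) {q : Polynomial (ZMod 4)} (hq : q.degree < (m : WithBot ℕ)) :
    rep4 m (mk4 m q) = q := by
  set p := Function.surjInv (Ideal.Quotient.mk_surjective (I := Ideal.span {fm4 m})) (mk4 m q)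
    with hp
  have hps : mk4 m p = mk4 m q :=
    Function.surjInv_eq (Ideal.Quotient.mk_surjective (I := Ideal.span {fm4 m})) _
  have hdvd : fm4 m ∣ p - q := by
    rw [← Ideal.mem_span_singleton]
    exact Ideal.Quotient.eq.mp hps
  have h1 : (p - q) %ₘ fm4 m = 0 := (Polynomial.modByMonic_eq_zero_iff_dvd (fm4_monic hm)).2 hdvd
  have : p %ₘ fm4 m = ((p - q) + q) %ₘ fm4 m := by rw [sub_add_cancel]
  rw [rep4, ← hp, this, Polynomial.add_modByMonic, h1, zero_add,
    (Polynomial.modByMonic_eq_self_iff (fm4_monic hm)).2 (by rw [fm4_degree hm]; exact hq)]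

lemma polyDbl_coeff (p : Polynomial (ZMod 2)) (j : ℕ) :
    (polyDbl p).coeff j = 2 * ((p.coeff j).val : ZMod 4) := by
  rw [polyDbl, Polynomial.finset_sum_coeff]
  simp only [Polynomial.coeff_C_mul, Polynomial.coeff_X_pow, mul_ite, mul_one, mul_zero]
  by_cases hj : j ∈ p.support
  · rw [Finset.sum_eq_single j (fun i _ hij => by simp [Ne.symm hij]) (fun h => absurd hj h)]
    simp
  · rw [Finset.sum_eq_zero (fun i hi => by
      rw [if_neg (fun hji : j = i => hj (hji ▸ hi))])]
    rw [Polynomial.notMem_support_iff.mp hj]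
    simp

lemma dbl_zmod_inj : ∀ x y : ZMod 2, 2 * ((x.val : ZMod 4)) = 2 * ((y.val : ZMod 4)) → x = y := by
  decide

lemma dbl_zmod_ne_zero : ∀ x : ZMod 2, x ≠ 0 ↔ (2 * ((x.val : ZMod 4))) ≠ 0 := by decide

lemma lee_dbl : ∀ x : ZMod 2, x ≠ 0 → lee (2 * ((x.val : ZMod 4))) = 2 := by decide

lemma polyDbl_support (p : Polynomial (ZMod 2)) : (polyDbl p).support = p.support := by
  ext j
  simp only [Polynomial.mem_support_iff, polyDbl_coeff]
  exact (dbl_zmod_ne_zero (p.coeff j)).symm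

lemma polyDbl_degree_le (p : Polynomial (ZMod 2)) : (polyDbl p).degree ≤ p.degree := by
  rw [Polynomial.degree_le_iff_coeff_zero]
  intro N hN
  rw [polyDbl_coeff, Polynomial.coeff_eq_zero_of_degree_lt hN]
  simp

lemma rep4_iota {m : ℕ} (hm : 0 < m) (r : R2 m) :
    rep4 m (iota m r) = polyDbl (rep2 m r) := by
  apply rep4_mk4 hm
  exact lt_of_le_of_lt (polyDbl_degree_le _) (rep2_degree_lt hm r)

lemma iota_inj {m : ℕ} (hm : 0 < m) : Function.Injective (iota m) := by
  intro r s h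
  have h2 : polyDbl (rep2 m r) = polyDbl (rep2 m s) := by
    rw [← rep4_iota hm r, ← rep4_iota hm s, h]
  have h3 : rep2 m r = rep2 m s := by
    ext j
    exact dbl_zmod_inj _ _ (by rw [← polyDbl_coeff, ← polyDbl_coeff, h2])
  rw [← mk2_rep2 hm r, ← mk2_rep2 hm s, h3]

lemma rep2_zero {m : ℕ} (hm : 0 < m) : rep2 m 0 = 0 := by
  have h0 : (0 : R2 m) = mk2 m 0 := by simp
  have hdeg : (0 : Polynomial (ZMod 2)).degree < (m : WithBot ℕ) := by
    rw [Polynomial.degree_zero]; exact WithBot.bot_lt_coe m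
  rw [h0, rep2_mk2 hm hdeg]

lemma iota_zero {m : ℕ} (hm : 0 < m) : iota m 0 = 0 := by
  rw [iota, rep2_zero hm]
  have : polyDbl 0 = 0 := by rw [polyDbl]; simp
  rw [this, map_zero]

lemma wtLee_iota {m : ℕ} (hm : 0 < m) (r : R2 m) : wtLee m (iota m r) = 2 * wt2 m r := by
  rw [wtLee, rep4_iota hm, wt2, polyDbl_support]
  have hconst : ∀ i ∈ (rep2 m r).support,
      lee ((polyDbl (rep2 m r)).coeff i) = 2 := fun i hi => by
    rw [polyDbl_coeff]
    exact lee_dbl _ (Polynomial.mem_support_iff.mp hi)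
  rw [Finset.sum_congr rfl hconst, Finset.sum_const, smul_eq_mul, mul_comm]

lemma fm_separable {m : ℕ} (hm : Odd m) (hmpos : 0 < m) : (fm m).Separable := by
  refine ⟨-1, X, ?_⟩
  have hm2 : ((m : ZMod 2)) = 1 := by
    obtain ⟨k, hk⟩ := hm; subst hk; push_cast
    rw [show (2 : ZMod 2) = 0 from rfl]; ring
  have hpow : (X : Polynomial (ZMod 2)) * X ^ (m - 1) = X ^ m := by
    rw [← pow_succ']; congr 1; omega
  rw [fm, Polynomial.derivative_sub, Polynomial.derivative_one, Polynomial.derivative_X_pow,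
    hm2, map_one, one_mul, sub_zero]
  linear_combination hpow

/-- The key annihilator lemma: a nonzero element of `⟨mk g⟩` cannot kill both `a` and `b`. -/
lemma key_lemma {m : ℕ} (hm : Odd m) (hmpos : 0 < m) (A B g : Polynomial (ZMod 2))
    (hg : g = EuclideanDomain.gcd A (EuclideanDomain.gcd B (fm m)))
    {c : R2 m} (hc : c ∈ Ideal.span {mk2 m g})
    (hca : c * mk2 m A = 0) (hcb : c * mk2 m B = 0) : c = 0 := by
  have hsep := fm_separable hm hmpos
  have hgdvd : g ∣ fm m := by
    rw [hg]
    exact dvd_trans (EuclideanDomain.gcd_dvd_right _ _) (EuclideanDomain.gcd_dvd_right _ _)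
  obtain ⟨h, hfg⟩ := hgdvd
  have hcop : IsCoprime g h := by
    rw [hfg] at hsep
    exact hsep.isCoprime
  have hg0 : g ≠ 0 := by
    intro h0
    apply (fm_monic hmpos).ne_zero
    rw [hfg, h0, zero_mul]
  obtain ⟨e, he⟩ := Ideal.mem_span_singleton'.mp hc
  obtain ⟨d, hd⟩ := Ideal.Quotient.mk_surjective (I := Ideal.span {fm m}) e
  have hd' : mk2 m d = e := hd
  have hcval : c = mk2 m (d * g) := by
    rw [map_mul, hd', he]
  have hdivA : h ∣ d * A := by
    have h1 : fm m ∣ d * g * A := by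
      rw [← mk2_eq_zero, map_mul, ← hcval]
      exact hca
    rw [hfg] at h1
    have h2 : g * h ∣ g * (d * A) := by
      have : d * g * A = g * (d * A) := by ring
      rwa [this] at h1
    exact (mul_dvd_mul_iff_left hg0).mp h2
  have hdivB : h ∣ d * B := by
    have h1 : fm m ∣ d * g * B := by
      rw [← mk2_eq_zero, map_mul, ← hcval]
      exact hcb
    rw [hfg] at h1
    have h2 : g * h ∣ g * (d * B) := by
      have : d * g * B = g * (d * B) := by ring
      rwa [this] at h1
    exact (mul_dvd_mul_iff_left hg0).mp h2
  have hdivF : h ∣ d * fm m := ⟨d * g, by rw [hfg]; ring⟩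
  -- Bézout
  have hB1 : g = A * EuclideanDomain.gcdA A (EuclideanDomain.gcd B (fm m))
      + EuclideanDomain.gcd B (fm m) * EuclideanDomain.gcdB A (EuclideanDomain.gcd B (fm m)) := by
    rw [hg]; exact EuclideanDomain.gcd_eq_gcd_ab _ _
  have hB2 : EuclideanDomain.gcd B (fm m)
      = B * EuclideanDomain.gcdA B (fm m) + fm m * EuclideanDomain.gcdB B (fm m) :=
    EuclideanDomain.gcd_eq_gcd_ab B (fm m)
  have hdg : h ∣ d * g := by
    have hcomb : d * g = (d * A) * EuclideanDomain.gcdA A (EuclideanDomain.gcd B (fm m))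
        + (d * B) * (EuclideanDomain.gcdA B (fm m)
            * EuclideanDomain.gcdB A (EuclideanDomain.gcd B (fm m)))
        + (d * fm m) * (EuclideanDomain.gcdB B (fm m)
            * EuclideanDomain.gcdB A (EuclideanDomain.gcd B (fm m))) := by
      rw [hB1, hB2]; ring
    rw [hcomb]
    exact dvd_add (dvd_add (hdivA.mul_right _) (hdivB.mul_right _)) (hdivF.mul_right _)
  have hdd : h ∣ d := hcop.symm.dvd_of_dvd_mul_right hdg
  obtain ⟨d', hd'⟩ := hdd
  rw [hcval, mk2_eq_zero]
  exact ⟨d', by rw [hfg, hd']; ring⟩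

/-- For `a = mk A`, `b = mk B` not both zero and
`g = gcd(A, B, X^m-1)`: every nonzero codeword of `C_{a,b}` arises as `(c·a, 2(c·b))`
for a unique nonzero `c ∈ ⟨g⟩`, and the minimum weight of `C_{a,b}` (Hamming weight on
the `Z/2`-part plus Lee weight on the `Z/4`-part) equals
`min { wt_H(c·a) + 2·wt_H(c·b) : 0 ≠ c ∈ ⟨g⟩ }`. -/
theorem statement16 (m : ℕ) (hm : Odd m) (hmpos : 0 < m)
    (A B : Polynomial (ZMod 2)) (hab : ¬(mk2 m A = 0 ∧ mk2 m B = 0))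
    (g : Polynomial (ZMod 2))
    (hg : g = EuclideanDomain.gcd A (EuclideanDomain.gcd B (fm m))) :
    (∀ w ∈ Cab m (mk2 m A) (mk2 m B), w ≠ 0 →
      ∃! c : R2 m, c ∈ Ideal.span {mk2 m g} ∧ c ≠ 0 ∧
        w = (c * mk2 m A, iota m (c * mk2 m B))) ∧
    sInf {n : ℕ | ∃ w ∈ Cab m (mk2 m A) (mk2 m B), w ≠ 0 ∧
        wt2 m w.1 + wtLee m w.2 = n}
      = sInf {n : ℕ | ∃ c ∈ Ideal.span {mk2 m g}, c ≠ (0 : R2 m) ∧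
          wt2 m (c * mk2 m A) + 2 * wt2 m (c * mk2 m B) = n} := by
  have hgdvd : g ∣ fm m := by
    rw [hg]
    exact dvd_trans (EuclideanDomain.gcd_dvd_right _ _) (EuclideanDomain.gcd_dvd_right _ _)
  obtain ⟨h, hfg⟩ := hgdvd
  have hcop : IsCoprime g h := by
    have hsep := fm_separable hm hmpos
    rw [hfg] at hsep
    exact hsep.isCoprime
  obtain ⟨u, v, huv⟩ := hcop
  have hgA : g ∣ A := by rw [hg]; exact EuclideanDomain.gcd_dvd_left _ _
  have hgB : g ∣ B := by
    rw [hg]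
    exact dvd_trans (EuclideanDomain.gcd_dvd_right _ _) (EuclideanDomain.gcd_dvd_left _ _)
  have hhA : mk2 m h * mk2 m A = 0 := by
    obtain ⟨A1, hA1⟩ := hgA
    rw [← map_mul, mk2_eq_zero]
    exact ⟨A1, by rw [hfg, hA1]; ring⟩
  have hhB : mk2 m h * mk2 m B = 0 := by
    obtain ⟨B1, hB1⟩ := hgB
    rw [← map_mul, mk2_eq_zero]
    exact ⟨B1, by rw [hfg, hB1]; ring⟩
  have hone : mk2 m (u * g) + mk2 m (v * h) = 1 := by
    rw [← map_add, huv, map_one]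
  have e1 : mk2 m (u * g) = 1 - mk2 m (v * h) := by rw [← hone]; ring
  have hcc : ∀ f : R2 m, (f * mk2 m (u * g)) * mk2 m A = f * mk2 m A
      ∧ (f * mk2 m (u * g)) * mk2 m B = f * mk2 m B := by
    intro f
    constructor
    · have h2 : (f * mk2 m (u * g)) * mk2 m A
          = f * mk2 m A - f * mk2 m v * (mk2 m h * mk2 m A) := by
        rw [e1, map_mul]; ring
      rw [h2, hhA, mul_zero, sub_zero]
    · have h2 : (f * mk2 m (u * g)) * mk2 m B
          = f * mk2 m B - f * mk2 m v * (mk2 m h * mk2 m B) := by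
        rw [e1, map_mul]; ring
      rw [h2, hhB, mul_zero, sub_zero]
  have part1 : ∀ w ∈ Cab m (mk2 m A) (mk2 m B), w ≠ 0 →
      ∃! c : R2 m, c ∈ Ideal.span {mk2 m g} ∧ c ≠ 0 ∧
        w = (c * mk2 m A, iota m (c * mk2 m B)) := by
    rintro w ⟨f, rfl⟩ hw0
    refine ⟨f * mk2 m (u * g), ⟨?_, ?_, ?_⟩, ?_⟩
    · exact Ideal.mem_span_singleton'.mpr ⟨f * mk2 m u, by rw [map_mul]; ring⟩
    · intro hc0
      apply hw0
      have h1 : f * mk2 m A = 0 := by rw [← (hcc f).1, hc0, zero_mul]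
      have h2 : f * mk2 m B = 0 := by rw [← (hcc f).2, hc0, zero_mul]
      rw [h1, h2, iota_zero hmpos]
      rfl
    · rw [(hcc f).1, (hcc f).2]
    · rintro c' ⟨hc's, hc'0, hc'eq⟩
      obtain ⟨e1', e2'⟩ := Prod.mk.injEq _ _ _ _ ▸ hc'eq
      have e2'' : f * mk2 m B = c' * mk2 m B := iota_inj hmpos e2'
      have hdiff : c' - f * mk2 m (u * g) = 0 := by
        refine key_lemma hm hmpos A B g hg
          (Ideal.sub_mem _ hc's
            (Ideal.mem_span_singleton'.mpr ⟨f * mk2 m u, by rw [map_mul]; ring⟩)) ?_ ?_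
        · rw [sub_mul, (hcc f).1, ← e1', sub_self]
        · rw [sub_mul, (hcc f).2, ← e2'', sub_self]
      exact sub_eq_zero.mp hdiff
  refine ⟨part1, ?_⟩
  have hseteq : {n : ℕ | ∃ w ∈ Cab m (mk2 m A) (mk2 m B), w ≠ 0 ∧
        wt2 m w.1 + wtLee m w.2 = n}
      = {n : ℕ | ∃ c ∈ Ideal.span {mk2 m g}, c ≠ (0 : R2 m) ∧
          wt2 m (c * mk2 m A) + 2 * wt2 m (c * mk2 m B) = n} := by
    ext n
    simp only [Set.mem_setOf_eq]
    constructor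
    · rintro ⟨w, hw, hw0, rfl⟩
      obtain ⟨c, ⟨hcs, hc0, hceq⟩, -⟩ := part1 w hw hw0
      refine ⟨c, hcs, hc0, ?_⟩
      rw [hceq]
      show wt2 m (c * mk2 m A) + 2 * wt2 m (c * mk2 m B)
          = wt2 m (c * mk2 m A) + wtLee m (iota m (c * mk2 m B))
      rw [wtLee_iota hmpos]
    · rintro ⟨c, hcs, hc0, rfl⟩
      refine ⟨(c * mk2 m A, iota m (c * mk2 m B)), ⟨c, rfl⟩, ?_, ?_⟩
      · intro h0
        rw [Prod.mk_eq_zero] at h0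
        apply hc0
        refine key_lemma hm hmpos A B g hg hcs h0.1 ?_
        have h2 := h0.2
        rw [← iota_zero hmpos] at h2
        exact iota_inj hmpos h2
      · show wt2 m (c * mk2 m A) + wtLee m (iota m (c * mk2 m B))
            = wt2 m (c * mk2 m A) + 2 * wt2 m (c * mk2 m B)
        rw [wtLee_iota hmpos]
  rw [hseteq]


end
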